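/- arXiv:1512.04219 — 3 statements merged into one kernel-verified Lean document; each statement's English description precedes it below -/
import Mathlib

section
/- Let r_A and r_B be vectors in ℝ³ with ‖r_A‖ ≤ π and ‖r_B‖ ≤ π, and let R_A = exp(S(r_A)) and R_B = exp(S(r_B)) be the rotation matrices obtained as matrix exponentials of the associated skew-symmetric matrices. Then arccos((trace(R_Bᵀ · R_A) − 1)/2) ≤ ‖r_A − r_B‖, i.e. the angle of the relative rotation R_B⁻¹R_A is at most the Euclidean distance between the multiplied axis-angle representations. -/
open Real Matrix Set
open scoped Nat
set_option maxHeartbeats 1000000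

/-- The skew-symmetric matrix associated to a vector `r ∈ ℝ³`. -/
noncomputable def skew (r : EuclideanSpace ℝ (Fin 3)) : Matrix (Fin 3) (Fin 3) ℝ :=
  !![0, -(r 2), r 1;
     r 2, 0, -(r 0);
     -(r 1), r 0, 0]

lemma norm_sq_eq (r : EuclideanSpace ℝ (Fin 3)) :
    ‖r‖ ^ 2 = r 0 ^ 2 + r 1 ^ 2 + r 2 ^ 2 := by
  rw [EuclideanSpace.norm_eq, Real.sq_sqrt (by positivity)]
  simp [Fin.sum_univ_three, sq_abs]

lemma skew_cube (r : EuclideanSpace ℝ (Fin 3)) :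
    (skew r) ^ 3 = (-(‖r‖^2)) • skew r := by
  rw [norm_sq_eq, pow_succ, pow_two]
  ext i j
  fin_cases i <;> fin_cases j <;>
    simp [skew, Matrix.mul_apply, Fin.sum_univ_three] <;> ring

lemma skew_pow_odd (r : EuclideanSpace ℝ (Fin 3)) (k : ℕ) :
    (skew r) ^ (2 * k + 1) = ((-(‖r‖^2))^k) • skew r := by
  induction k with
  | zero => simp
  | succ n ih =>
      have h1 : 2 * (n + 1) + 1 = (2 * n + 1) + 2 := by ring
      have h3 : skew r * skew r ^ 2 = (-(‖r‖^2)) • skew r := by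
        rw [← pow_succ']; exact skew_cube r
      rw [h1, pow_add, ih, smul_mul_assoc, h3, smul_smul, ← pow_succ]

lemma skew_pow_even (r : EuclideanSpace ℝ (Fin 3)) (k : ℕ) :
    (skew r) ^ (2 * k + 2) = ((-(‖r‖^2))^k) • (skew r)^2 := by
  have h1 : 2 * k + 2 = (2 * k + 1) + 1 := by ring
  rw [h1, pow_succ, skew_pow_odd, smul_mul_assoc, ← pow_two]

noncomputable def fc (t : ℝ) : ℝ := if t = 0 then 1 else Real.sin t / t
noncomputable def gc (t : ℝ) : ℝ := if t = 0 then 1/2 else (1 - Real.cos t) / t^2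

lemma rodrigues (r : EuclideanSpace ℝ (Fin 3)) :
    NormedSpace.exp (skew r) = 1 + fc ‖r‖ • skew r + gc ‖r‖ • (skew r)^2 := by
  rcases eq_or_ne r 0 with rfl | hr
  · have h0 : skew 0 = 0 := by
      ext i j
      fin_cases i <;> fin_cases j <;>
        simp [skew, Matrix.vecHead, Matrix.vecTail, Function.comp]
    rw [h0]
    simp [NormedSpace.exp_zero]
  · have hα : ‖r‖ ≠ 0 := norm_ne_zero_iff.mpr hr
    have hα2 : (‖r‖ : ℝ)^2 ≠ 0 := pow_ne_zero _ hα
    rw [fc, gc, if_neg hα, if_neg hα]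
    rw [NormedSpace.exp_eq_tsum ℝ]
    have hneg : ∀ k : ℕ, (-(‖r‖^2))^k = (-1 : ℝ)^k * ‖r‖^(2*k) := by
      intro k; rw [neg_pow, pow_mul]
    have hodd : HasSum (fun k : ℕ => (((2*k+1)! : ℝ)⁻¹) • (skew r)^(2*k+1))
        ((Real.sin ‖r‖ / ‖r‖) • skew r) := by
      have hs := ((Real.hasSum_sin ‖r‖).div_const ‖r‖).smul_const (skew r)
      convert hs using 2 with k
      rw [skew_pow_odd, smul_smul, hneg]
      congr 1
      have hfk : ((2*k+1)! : ℝ) ≠ 0 := Nat.cast_ne_zero.mpr (Nat.factorial_ne_zero _)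
      field_simp
      ring
    have heven : HasSum (fun k : ℕ => (((2*k)! : ℝ)⁻¹) • (skew r)^(2*k))
        ((1 : Matrix (Fin 3) (Fin 3) ℝ) + ((1 - Real.cos ‖r‖)/‖r‖^2) • (skew r)^2) := by
      have hshift : HasSum (fun k : ℕ => (((2*(k+1))! : ℝ)⁻¹) • (skew r)^(2*(k+1)))
          (((1 - Real.cos ‖r‖)/‖r‖^2) • (skew r)^2) := by
        have hc1 : HasSum (fun n : ℕ => (-1 : ℝ)^(n+1) * ‖r‖^(2*(n+1)) / (2*(n+1))!)
            (Real.cos ‖r‖ - 1) := by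
          apply (hasSum_nat_add_iff (f := fun n : ℕ => (-1 : ℝ)^n * ‖r‖^(2*n) / (2*n)!) 1).mpr
          simpa using Real.hasSum_cos ‖r‖
        have hc2 := ((hc1.neg.div_const (‖r‖^2)).smul_const ((skew r)^2))
        convert hc2 using 2 with k
        · rw [show 2*(k+1) = 2*k+2 from by ring, skew_pow_even, smul_smul, hneg]
          congr 1
          have hfk : ((2*k+2)! : ℝ) ≠ 0 := Nat.cast_ne_zero.mpr (Nat.factorial_ne_zero _)
          field_simp
          ring
        · rw [neg_sub]
      have h0 : (((2*0)! : ℝ)⁻¹) • (skew r)^(2*0) = (1 : Matrix (Fin 3) (Fin 3) ℝ) := by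
        norm_num
      have h1 := HasSum.zero_add (f := fun k : ℕ => (((2*k)! : ℝ)⁻¹) • (skew r)^(2*k)) hshift
      convert h1 using 1
      rw [← h0]
    have hfull : HasSum (fun n : ℕ => ((n ! : ℝ)⁻¹) • (skew r)^n)
        ((1 + ((1 - Real.cos ‖r‖)/‖r‖^2) • (skew r)^2) + (Real.sin ‖r‖ / ‖r‖) • skew r) :=
      heven.even_add_odd hodd
    have hre : (1 + ((1 - Real.cos ‖r‖)/‖r‖^2) • (skew r)^2) + (Real.sin ‖r‖ / ‖r‖) • skew r
        = 1 + (Real.sin ‖r‖ / ‖r‖) • skew r + ((1 - Real.cos ‖r‖)/‖r‖^2) • (skew r)^2 := by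
      abel
    rw [← hre]
    exact hfull.tsum_eq
lemma rot_lit (a : EuclideanSpace ℝ (Fin 3)) (f g : ℝ) :
    1 + f • skew a + g • (skew a)^2 =
      !![1 - g*(a 1^2) - g*(a 2^2), -(f*a 2) + g*a 0*a 1, f*a 1 + g*a 0*a 2;
         f*a 2 + g*a 0*a 1, 1 - g*(a 0^2) - g*(a 2^2), -(f*a 0) + g*a 1*a 2;
         -(f*a 1) + g*a 0*a 2, f*a 0 + g*a 1*a 2, 1 - g*(a 0^2) - g*(a 1^2)] := by
  rw [pow_two]
  ext i j
  fin_cases i <;> fin_cases j <;>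
    simp [skew, Matrix.mul_apply, Matrix.one_apply, Fin.sum_univ_three] <;> ring

lemma trace_transpose_mul (M N : Matrix (Fin 3) (Fin 3) ℝ) :
    Matrix.trace (Mᵀ * N) = ∑ i, ∑ j, M j i * N j i := by
  simp [Matrix.trace, Matrix.diag, Matrix.mul_apply, Matrix.transpose_apply]

lemma trace_formula (a b : EuclideanSpace ℝ (Fin 3)) (f g f' g' : ℝ) :
    Matrix.trace ((1 + f' • skew b + g' • (skew b)^2)ᵀ * (1 + f • skew a + g • (skew a)^2))
      = 3 - 2*(b 0^2 + b 1^2 + b 2^2)*g' - 2*(a 0^2 + a 1^2 + a 2^2)*g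
        + 2*f*f'*(a 0*b 0 + a 1*b 1 + a 2*b 2)
        + g*g'*((a 0*b 0 + a 1*b 1 + a 2*b 2)^2 + (a 0^2+a 1^2+a 2^2)*(b 0^2+b 1^2+b 2^2)) := by
  rw [rot_lit, rot_lit, trace_transpose_mul]
  simp [Fin.sum_univ_three]
  ring

lemma mul_cos_le_sin {u : ℝ} (h0 : 0 ≤ u) (h1 : u ≤ π) : u * Real.cos u ≤ Real.sin u := by
  have hd : ∀ v : ℝ, HasDerivAt (fun w => Real.sin w - w * Real.cos w) (v * Real.sin v) v := by
    intro v
    have h := (Real.hasDerivAt_sin v).sub ((hasDerivAt_id v).mul (Real.hasDerivAt_cos v))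
    refine h.congr_deriv (Eq.symm ?_)
    simp only [id_eq]
    ring
  have hmono : MonotoneOn (fun w => Real.sin w - w * Real.cos w) (Icc 0 π) := by
    apply monotoneOn_of_deriv_nonneg (convex_Icc 0 π)
    · exact (Real.continuous_sin.sub (continuous_id.mul Real.continuous_cos)).continuousOn
    · intro v hv
      exact (hd v).differentiableAt.differentiableWithinAt
    · intro v hv
      rw [interior_Icc] at hv
      rw [(hd v).deriv]
      exact mul_nonneg hv.1.le (Real.sin_nonneg_of_nonneg_of_le_pi hv.1.le hv.2.le)
  have h := hmono (left_mem_Icc.mpr Real.pi_pos.le) ⟨h0, h1⟩ h0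
  simpa using h

lemma convexOn_cos_sqrt : ConvexOn ℝ (Icc (0:ℝ) (π^2)) (fun t => Real.cos (Real.sqrt t)) := by
  set phi : ℝ → ℝ := fun t => -(Real.sin (Real.sqrt t) / (2 * Real.sqrt t)) with hphi
  have hd1 : ∀ t ∈ Ioo (0:ℝ) (π^2), HasDerivAt (fun t => Real.cos (Real.sqrt t)) (phi t) t := by
    intro t ht
    have hs := Real.hasDerivAt_sqrt ht.1.ne'
    have hc := (Real.hasDerivAt_cos (Real.sqrt t)).comp t hs
    refine hc.congr_deriv (Eq.symm ?_)
    rw [hphi]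
    field_simp
  have hderiv_eq : ∀ t ∈ Ioo (0:ℝ) (π^2), deriv (fun t => Real.cos (Real.sqrt t)) t = phi t :=
    fun t ht => (hd1 t ht).deriv
  have hd2 : ∀ t ∈ Ioo (0:ℝ) (π^2), HasDerivAt phi
      ((Real.sin (Real.sqrt t) / Real.sqrt t - Real.cos (Real.sqrt t)) / (4 * t)) t := by
    intro t ht
    have hst : Real.sqrt t ≠ 0 := (Real.sqrt_pos.mpr ht.1).ne'
    have hs := Real.hasDerivAt_sqrt ht.1.ne'
    have hu : HasDerivAt (fun t => Real.sin (Real.sqrt t))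
        (Real.cos (Real.sqrt t) * (1 / (2 * Real.sqrt t))) t :=
      (Real.hasDerivAt_sin (Real.sqrt t)).comp t hs
    have hv : HasDerivAt (fun t => 2 * Real.sqrt t) (2 * (1 / (2 * Real.sqrt t))) t :=
      hs.const_mul 2
    have hvne : 2 * Real.sqrt t ≠ 0 := by positivity
    have hq := (hu.div hv hvne).neg
    refine hq.congr_deriv (Eq.symm ?_)
    have ht2 : Real.sqrt t * Real.sqrt t = t := Real.mul_self_sqrt ht.1.le
    rw [show (4:ℝ)*t = (2*Real.sqrt t)^2 from by rw [mul_pow, Real.sq_sqrt ht.1.le]; ring]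
    field_simp
    ring
  apply convexOn_of_deriv2_nonneg (convex_Icc _ _)
  · exact (Real.continuous_cos.comp Real.continuous_sqrt).continuousOn
  · rw [interior_Icc]
    exact fun t ht => (hd1 t ht).differentiableAt.differentiableWithinAt
  · rw [interior_Icc]
    intro t ht
    have hev : deriv (fun t => Real.cos (Real.sqrt t)) =ᶠ[nhds t] phi :=
      Filter.eventuallyEq_of_mem (Ioo_mem_nhds ht.1 ht.2) hderiv_eq
    exact (hd2 t ht).differentiableAt.congr_of_eventuallyEq hev |>.differentiableWithinAt
  · rw [interior_Icc]
    intro t ht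
    have hev : deriv (fun t => Real.cos (Real.sqrt t)) =ᶠ[nhds t] phi :=
      Filter.eventuallyEq_of_mem (Ioo_mem_nhds ht.1 ht.2) hderiv_eq
    have : deriv^[2] (fun t => Real.cos (Real.sqrt t)) t = deriv phi t := by
      simp only [Function.iterate_succ, Function.iterate_zero, Function.comp_apply, id]
      exact Filter.EventuallyEq.deriv_eq hev
    rw [this, (hd2 t ht).deriv]
    have hst : 0 < Real.sqrt t := Real.sqrt_pos.mpr ht.1
    have hle : Real.sqrt t ≤ π := by
      rw [show π = Real.sqrt (π^2) from (Real.sqrt_sq Real.pi_pos.le).symm]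
      exact Real.sqrt_le_sqrt ht.2.le
    have key := mul_cos_le_sin hst.le hle
    have : Real.cos (Real.sqrt t) ≤ Real.sin (Real.sqrt t) / Real.sqrt t := by
      rw [le_div_iff₀ hst]; linarith [key]
    have h4t : (0:ℝ) < 4 * t := by linarith [ht.1]
    apply div_nonneg (by linarith) h4t.le

lemma cos_sqrt_le {A B x : ℝ} (hA0 : 0 ≤ A) (hA : A ≤ π/2) (hB0 : 0 ≤ B) (hB : B ≤ π/2)
    (hx1 : -1 ≤ x) (hx2 : x ≤ 1) :
    Real.cos (Real.sqrt (A^2 + B^2 - 2*A*B*x))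
      ≤ Real.cos A * Real.cos B + x * (Real.sin A * Real.sin B) := by
  have hπ : (0:ℝ) < π := Real.pi_pos
  have h1 : ((A-B)^2) ∈ Icc (0:ℝ) (π^2) := by
    constructor
    · positivity
    · have : |A - B| ≤ π := by
        rw [abs_le]; constructor <;> nlinarith
      calc (A-B)^2 = |A-B|^2 := (sq_abs _).symm
        _ ≤ π^2 := by nlinarith [abs_nonneg (A-B)]
  have h2 : ((A+B)^2) ∈ Icc (0:ℝ) (π^2) := by
    constructor
    · positivity
    · nlinarith
  have ha : (0:ℝ) ≤ (1+x)/2 := by linarith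
  have hb : (0:ℝ) ≤ (1-x)/2 := by linarith
  have hab : (1+x)/2 + (1-x)/2 = (1:ℝ) := by ring
  have hc := convexOn_cos_sqrt.2 h1 h2 ha hb hab
  simp only [smul_eq_mul] at hc
  have harg : (1+x)/2 * (A-B)^2 + (1-x)/2 * (A+B)^2 = A^2 + B^2 - 2*A*B*x := by ring
  rw [harg] at hc
  have e1 : Real.sqrt ((A-B)^2) = |A - B| := Real.sqrt_sq_eq_abs _
  have e2 : Real.sqrt ((A+B)^2) = A + B := Real.sqrt_sq (by linarith)
  rw [e1, e2, Real.cos_abs] at hc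
  calc Real.cos (Real.sqrt (A^2 + B^2 - 2*A*B*x))
      ≤ (1+x)/2 * Real.cos (A-B) + (1-x)/2 * Real.cos (A+B) := hc
    _ = Real.cos A * Real.cos B + x * (Real.sin A * Real.sin B) := by
        rw [Real.cos_sub, Real.cos_add]; ring

lemma hfc_mul (t : ℝ) : t * fc t = Real.sin t := by
  rcases eq_or_ne t 0 with rfl | h
  · simp [fc]
  · rw [fc, if_neg h]; field_simp

lemma hgc_mul (t : ℝ) : t^2 * gc t = 1 - Real.cos t := by
  rcases eq_or_ne t 0 with rfl | h
  · simp [gc]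
  · rw [gc, if_neg h]; field_simp

lemma arccos_le_of_cos_le {y D : ℝ} (hD0 : 0 ≤ D) (hDπ : D ≤ π)
    (h : Real.cos D ≤ y) : Real.arccos y ≤ D := by
  have h1 : Real.arcsin (Real.cos D) ≤ Real.arcsin y := Real.monotone_arcsin h
  have h2 : Real.arccos y ≤ Real.arccos (Real.cos D) := by
    rw [Real.arccos, Real.arccos]; linarith
  rwa [Real.arccos_cos hD0 hDπ] at h2

theorem angle_relative_rotation_le_dist
    (rA rB : EuclideanSpace ℝ (Fin 3)) (hA : ‖rA‖ ≤ π) (hB : ‖rB‖ ≤ π) :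
    Real.arccos ((Matrix.trace ((NormedSpace.exp (skew rB))ᵀ * NormedSpace.exp (skew rA)) - 1) / 2)
      ≤ ‖rA - rB‖ := by
  have hπ : (0:ℝ) < π := Real.pi_pos
  set D := ‖rA - rB‖ with hDdef
  have hD0 : 0 ≤ D := norm_nonneg _
  rcases le_or_gt D π with hDπ | hDπ
  swap
  · exact le_trans (Real.arccos_le_pi _) hDπ.le
  apply arccos_le_of_cos_le hD0 hDπ
  -- notation
  set α := ‖rA‖ with hαdef
  set β := ‖rB‖ with hβdef
  have hα0 : 0 ≤ α := norm_nonneg _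
  have hβ0 : 0 ≤ β := norm_nonneg _
  set p := rA 0 * rB 0 + rA 1 * rB 1 + rA 2 * rB 2 with hpdef
  have hTr : Matrix.trace ((NormedSpace.exp (skew rB))ᵀ * NormedSpace.exp (skew rA))
      = 3 - 2*β^2*gc β - 2*α^2*gc α + 2*(fc α)*(fc β)*p
        + (gc α)*(gc β)*(p^2 + α^2*β^2) := by
    rw [rodrigues rA, rodrigues rB, trace_formula, ← norm_sq_eq rA, ← norm_sq_eq rB, ← hαdef,
      ← hβdef, ← hpdef]
  rw [hTr]
  have hD2 : D^2 = α^2 + β^2 - 2*p := by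
    rw [hDdef, hαdef, hβdef, norm_sq_eq, norm_sq_eq, norm_sq_eq, hpdef]
    simp only [PiLp.sub_apply]
    ring
  have hCS : |p| ≤ α * β := by
    have hip : (inner ℝ rA rB : ℝ) = p := by
      simp [PiLp.inner_apply, RCLike.inner_apply, Fin.sum_univ_three, hpdef]
      try ring
    have := abs_real_inner_le_norm rA rB
    rwa [hip] at this
  -- degenerate cases
  rcases eq_or_ne α 0 with hα|hα
  · have hrA : rA = 0 := norm_eq_zero.mp hα
    have hp0 : p = 0 := by
      simp [hpdef, hrA]
    have hDβ : D = β := by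
      rw [hDdef, hrA, hβdef, zero_sub, norm_neg]
    have hg : 2*β^2*gc β = 2*(1 - Real.cos β) := by
      rw [show 2*β^2*gc β = 2*(β^2*gc β) from by ring, hgc_mul]
    rw [hDβ, hp0, hα]
    have hg2 : 2*β^2*gc β = 2*(1 - Real.cos β) := by
      rw [show 2*β^2*gc β = 2*(β^2*gc β) from by ring, hgc_mul]
    linarith [hg2]
  rcases eq_or_ne β 0 with hβ|hβ
  · have hrB : rB = 0 := norm_eq_zero.mp hβ
    have hp0 : p = 0 := by
      simp [hpdef, hrB]
    have hDα : D = α := by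
      rw [hDdef, hrB, hαdef, sub_zero]
    rw [hDα, hp0, hβ]
    have hg2 : 2*α^2*gc α = 2*(1 - Real.cos α) := by
      rw [show 2*α^2*gc α = 2*(α^2*gc α) from by ring, hgc_mul]
    linarith [hg2]
  -- main case
  have hαpos : 0 < α := lt_of_le_of_ne hα0 (Ne.symm hα)
  have hβpos : 0 < β := lt_of_le_of_ne hβ0 (Ne.symm hβ)
  set x := p / (α * β) with hxdef
  have hxp : α * β * x = p := by
    rw [hxdef]; field_simp
  have hx1 : -1 ≤ x ∧ x ≤ 1 := by
    rw [← abs_le, hxdef, abs_div, abs_of_pos (by positivity : (0:ℝ) < α*β)]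
    exact div_le_one_of_le₀ hCS (by positivity)
  set sa := Real.sin (α/2) with hsadef
  set ca := Real.cos (α/2) with hcadef
  set sb := Real.sin (β/2) with hsbdef
  set cb := Real.cos (β/2) with hcbdef
  have e1 : sa^2 + ca^2 = 1 := Real.sin_sq_add_cos_sq _
  have e2 : sb^2 + cb^2 = 1 := Real.sin_sq_add_cos_sq _
  have hsinα : Real.sin α = 2*sa*ca := by
    rw [hsadef, hcadef, ← Real.sin_two_mul, show 2*(α/2) = α from by ring]
  have hsinβ : Real.sin β = 2*sb*cb := by
    rw [hsbdef, hcbdef, ← Real.sin_two_mul, show 2*(β/2) = β from by ring]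
  have hcosα : Real.cos α = 1 - 2*sa^2 := by
    have h := Real.cos_sq (α/2)
    rw [show 2*(α/2) = α from by ring] at h
    nlinarith [e1]
  have hcosβ : Real.cos β = 1 - 2*sb^2 := by
    have h := Real.cos_sq (β/2)
    rw [show 2*(β/2) = β from by ring] at h
    nlinarith [e2]
  -- the quaternion inner product
  set t := ca*cb + x*(sa*sb) with htdef
  -- step 1 : cos (D/2) ≤ t
  have harg : (α/2)^2 + (β/2)^2 - 2*(α/2)*(β/2)*x = (D/2)^2 := by
    linear_combination (-1/4 : ℝ) * hD2 + (-1/2 : ℝ) * hxp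
  have key1 : Real.cos (D/2) ≤ t := by
    have h := cos_sqrt_le (by positivity) (by linarith) (by positivity) (by linarith)
      hx1.1 hx1.2 (A := α/2) (B := β/2)
    rw [harg, Real.sqrt_sq (by positivity)] at h
    rw [htdef, hsadef, hcadef, hsbdef, hcbdef]
    linarith [h]
  have key2 : 0 ≤ Real.cos (D/2) := by
    apply Real.cos_nonneg_of_mem_Icc
    constructor <;> [linarith; linarith]
  have key3 : Real.cos (D/2)^2 ≤ t^2 := by nlinarith
  have hcosD : Real.cos D = 2*Real.cos (D/2)^2 - 1 := by
    have h := Real.cos_sq (D/2)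
    rw [show 2*(D/2) = D from by ring] at h
    linarith
  -- step 2 : the trace equals 4 t^2 - 1
  have hfcα : α * fc α = 2*sa*ca := by rw [hfc_mul, hsinα]
  have hfcβ : β * fc β = 2*sb*cb := by rw [hfc_mul, hsinβ]
  have hgcα : α^2 * gc α = 2*sa^2 := by rw [hgc_mul, hcosα]; ring
  have hgcβ : β^2 * gc β = 2*sb^2 := by rw [hgc_mul, hcosβ]; ring
  have hT2 : 2*(fc α)*(fc β)*p = 8*sa*ca*sb*cb*x := by
    have : 2*(fc α)*(fc β)*p = 2*(α*fc α)*(β*fc β)*x := by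
      rw [← hxp]; ring
    rw [this, hfcα, hfcβ]; ring
  have hT3 : (gc α)*(gc β)*(p^2 + α^2*β^2) = 4*sa^2*sb^2*(x^2+1) := by
    have hfα : gc α = 2*sa^2/α^2 := by
      rw [← hgcα]; field_simp
    have hfβ : gc β = 2*sb^2/β^2 := by
      rw [← hgcβ]; field_simp
    rw [hfα, hfβ, ← hxp]
    field_simp
    ring
  have hT1a : 2*α^2*gc α = 4*sa^2 := by rw [show 2*α^2*gc α = 2*(α^2*gc α) from by ring, hgcα]; ring
  have hT1b : 2*β^2*gc β = 4*sb^2 := by rw [show 2*β^2*gc β = 2*(β^2*gc β) from by ring, hgcβ]; ring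
  have hTfinal : 3 - 2*β^2*gc β - 2*α^2*gc α + 2*(fc α)*(fc β)*p
      + (gc α)*(gc β)*(p^2 + α^2*β^2) = 4*t^2 - 1 := by
    rw [hT1a, hT1b, hT2, hT3, htdef]
    linear_combination (4*(sb^2+cb^2-1) - 4*cb^2)*e1 + (-4*ca^2)*e2
  rw [hTfinal, hcosD]
  linarith
end

section
/- Rodrigues' rotation theorem (trace form): let a_A, a_B ∈ ℝ³ be unit vectors and α, β ∈ ℝ. Then the trace of the composed rotation exp(S(β·a_B)) · exp(S(α·a_A)) equals 4c² − 1, where c = cos(α/2)·cos(β/2) − sin(α/2)·sin(β/2)·⟨a_A, a_B⟩. Equivalently, the cosine of the rotation angle of the composition is 2c² − 1, so the composed rotation has angle 2·arccos|c|. -/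
open Real Matrix

namespace RodriguesAux

def K (x y z : ℝ) : Matrix (Fin 3) (Fin 3) ℝ :=
  !![0, -z, y;
     z, 0, -x;
     -y, x, 0]

lemma skew_eq (r : EuclideanSpace ℝ (Fin 3)) : skew r = K (r 0) (r 1) (r 2) := rfl

lemma skew_smul_eq (c : ℝ) (r : EuclideanSpace ℝ (Fin 3)) :
    skew (c • r) = K (c * r 0) (c * r 1) (c * r 2) := rfl

lemma K_smul (c x y z : ℝ) : K (c * x) (c * y) (c * z) = c • K x y z := by
  ext i j
  fin_cases i <;> fin_cases j <;> simp [K]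

lemma K_cube (x y z : ℝ) (h : x ^ 2 + y ^ 2 + z ^ 2 = 1) :
    K x y z ^ 3 = -(K x y z) := by
  rw [pow_succ, pow_two, K, Matrix.mul_fin_three, Matrix.mul_fin_three]
  ext i j
  fin_cases i <;> fin_cases j <;> simp <;>
    first
      | ring1
      | linear_combination x * h
      | linear_combination (-x) * h
      | linear_combination y * h
      | linear_combination (-y) * h
      | linear_combination z * h
      | linear_combination (-z) * h

lemma pow_odd (A : Matrix (Fin 3) (Fin 3) ℝ) (h3 : A ^ 3 = -A) (k : ℕ) :
    A ^ (2 * k + 1) = ((-1 : ℝ) ^ k) • A := by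
  induction k with
  | zero => simp
  | succ n ih =>
    have : 2 * (n + 1) + 1 = (2 * n + 1) + 2 := by ring
    rw [this, pow_add, ih, smul_mul_assoc,
      show A * A ^ 2 = A ^ 3 from (pow_succ' A 2).symm, h3, pow_succ]
    simp

lemma pow_even (A : Matrix (Fin 3) (Fin 3) ℝ) (h3 : A ^ 3 = -A) (k : ℕ) :
    A ^ (2 * (k + 1)) = ((-1 : ℝ) ^ k) • A ^ 2 := by
  have : 2 * (k + 1) = (2 * k + 1) + 1 := by ring
  rw [this, pow_succ, pow_odd A h3, smul_mul_assoc, ← pow_two]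


lemma exp_smul_cube (A : Matrix (Fin 3) (Fin 3) ℝ) (h3 : A ^ 3 = -A) (t : ℝ) :
    NormedSpace.exp (t • A)
      = (1 + (1 - Real.cos t) • A ^ 2) + Real.sin t • A := by
  have key : HasSum (fun n : ℕ => ((Nat.factorial n : ℝ))⁻¹ • (t • A) ^ n)
      ((1 + (1 - Real.cos t) • A ^ 2) + Real.sin t • A) := by
    refine HasSum.even_add_odd ?_ ?_
    · -- even part
      have hc : HasSum (fun k : ℕ => (-1 : ℝ) ^ (k + 1) * t ^ (2 * (k + 1)) / (Nat.factorial (2 * (k + 1)) : ℝ))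
          (Real.cos t - 1) := by
        refine (hasSum_nat_add_iff (f := fun k : ℕ => (-1 : ℝ) ^ k * t ^ (2 * k) / (Nat.factorial (2 * k) : ℝ)) 1).mpr ?_
        simpa using Real.hasSum_cos t
      have hc2 : HasSum (fun k : ℕ => (-((-1 : ℝ) ^ (k + 1) * t ^ (2 * (k + 1)) / (Nat.factorial (2 * (k + 1)) : ℝ))) • A ^ 2)
          ((1 - Real.cos t) • A ^ 2) := by
        have := hc.neg.smul_const (A ^ 2)
        simpa [neg_sub] using this
      have heq : (fun k : ℕ => ((Nat.factorial (2 * (k + 1)) : ℝ)⁻¹) • (t • A) ^ (2 * (k + 1)))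
          = fun k : ℕ => (-((-1 : ℝ) ^ (k + 1) * t ^ (2 * (k + 1)) / (Nat.factorial (2 * (k + 1)) : ℝ))) • A ^ 2 := by
        funext k
        rw [smul_pow, pow_even A h3 k, smul_smul, smul_smul]
        congr 1
        have hfac : (Nat.factorial (2 * (k + 1)) : ℝ) ≠ 0 := Nat.cast_ne_zero.mpr (Nat.factorial_ne_zero _)
        field_simp
        ring
      have hshift : HasSum (fun k : ℕ => ((Nat.factorial (2 * (k + 1)) : ℝ)⁻¹) • (t • A) ^ (2 * (k + 1)))
          ((1 - Real.cos t) • A ^ 2) := by rw [heq]; exact hc2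
      have h0 := hshift.zero_add (f := fun k : ℕ => ((Nat.factorial (2 * k) : ℝ)⁻¹) • (t • A) ^ (2 * k))
      simpa using h0
    · -- odd part
      have hs := (Real.hasSum_sin t).smul_const A
      convert hs using 2 with k
      rw [smul_pow, pow_odd A h3 k, smul_smul, smul_smul]
      congr 1
      have hfac : (Nat.factorial (2 * k + 1) : ℝ) ≠ 0 := Nat.cast_ne_zero.mpr (Nat.factorial_ne_zero _)
      field_simp
  rw [NormedSpace.exp_eq_tsum (𝕂 := ℝ)]
  exact key.tsum_eq


lemma trace_aux (x y z u v w sa ca sb cb : ℝ) :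
    Matrix.trace (((1 + (1 - cb) • K u v w ^ 2) + sb • K u v w)
        * ((1 + (1 - ca) • K x y z ^ 2) + sa • K x y z))
      = 3 - 2 * (1 - ca) * (x ^ 2 + y ^ 2 + z ^ 2) - 2 * (1 - cb) * (u ^ 2 + v ^ 2 + w ^ 2)
        - 2 * sa * sb * (x * u + y * v + z * w)
        + (1 - ca) * (1 - cb) * ((x * u + y * v + z * w) ^ 2
            + (x ^ 2 + y ^ 2 + z ^ 2) * (u ^ 2 + v ^ 2 + w ^ 2)) := by
  simp [K, pow_two, Matrix.trace, Matrix.diag, Matrix.mul_apply, Fin.sum_univ_succ,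
    Matrix.one_apply, Matrix.add_apply, Matrix.smul_apply, smul_eq_mul]
  ring

lemma norm_sq_eq (a : EuclideanSpace ℝ (Fin 3)) (h : ‖a‖ = 1) :
    a 0 ^ 2 + a 1 ^ 2 + a 2 ^ 2 = 1 := by
  have h1 := EuclideanSpace.norm_eq a
  rw [h] at h1
  have h3 : (∑ i : Fin 3, ‖a i‖ ^ 2) = 1 := by
    nlinarith [Real.sq_sqrt (by positivity : (0:ℝ) ≤ ∑ i : Fin 3, ‖a i‖ ^ 2), h1.symm]
  simp [Fin.sum_univ_succ, Real.norm_eq_abs, sq_abs] at h3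
  linarith

lemma inner_eq (a b : EuclideanSpace ℝ (Fin 3)) :
    (inner ℝ a b : ℝ) = a 0 * b 0 + a 1 * b 1 + a 2 * b 2 := by
  simp [PiLp.inner_apply, RCLike.inner_apply, Fin.sum_univ_succ]
  ring

end RodriguesAux

set_option maxHeartbeats 1000000 in
open RodriguesAux in
theorem rodrigues_rotation_theorem_trace
    (aA aB : EuclideanSpace ℝ (Fin 3)) (hA : ‖aA‖ = 1) (hB : ‖aB‖ = 1) (α β : ℝ) :
    Matrix.trace (NormedSpace.exp (skew (β • aB)) * NormedSpace.exp (skew (α • aA)))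
        = 4 * (Real.cos (α / 2) * Real.cos (β / 2)
            - Real.sin (α / 2) * Real.sin (β / 2) * (inner ℝ aA aB : ℝ)) ^ 2 - 1 ∧
    Real.arccos
        ((Matrix.trace (NormedSpace.exp (skew (β • aB)) * NormedSpace.exp (skew (α • aA))) - 1) / 2)
      = 2 * Real.arccos |Real.cos (α / 2) * Real.cos (β / 2)
            - Real.sin (α / 2) * Real.sin (β / 2) * (inner ℝ aA aB : ℝ)| := by
  have hnA := norm_sq_eq aA hA
  have hnB := norm_sq_eq aB hB
  have heA : NormedSpace.exp (skew (α • aA))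
      = (1 + (1 - Real.cos α) • K (aA 0) (aA 1) (aA 2) ^ 2)
        + Real.sin α • K (aA 0) (aA 1) (aA 2) := by
    rw [skew_smul_eq, K_smul, exp_smul_cube _ (K_cube _ _ _ hnA) α]
  have heB : NormedSpace.exp (skew (β • aB))
      = (1 + (1 - Real.cos β) • K (aB 0) (aB 1) (aB 2) ^ 2)
        + Real.sin β • K (aB 0) (aB 1) (aB 2) := by
    rw [skew_smul_eq, K_smul, exp_smul_cube _ (K_cube _ _ _ hnB) β]
  have hca : Real.cos α = 2 * Real.cos (α / 2) ^ 2 - 1 := by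
    have := Real.cos_two_mul (α / 2); rwa [show 2 * (α / 2) = α by ring] at this
  have hsa : Real.sin α = 2 * Real.sin (α / 2) * Real.cos (α / 2) := by
    have := Real.sin_two_mul (α / 2); rwa [show 2 * (α / 2) = α by ring] at this
  have hcb : Real.cos β = 2 * Real.cos (β / 2) ^ 2 - 1 := by
    have := Real.cos_two_mul (β / 2); rwa [show 2 * (β / 2) = β by ring] at this
  have hsb : Real.sin β = 2 * Real.sin (β / 2) * Real.cos (β / 2) := by
    have := Real.sin_two_mul (β / 2); rwa [show 2 * (β / 2) = β by ring] at this
  have p1 := Real.sin_sq_add_cos_sq (α / 2)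
  have p2 := Real.sin_sq_add_cos_sq (β / 2)
  have part1 : Matrix.trace (NormedSpace.exp (skew (β • aB)) * NormedSpace.exp (skew (α • aA)))
      = 4 * (Real.cos (α / 2) * Real.cos (β / 2)
          - Real.sin (α / 2) * Real.sin (β / 2) * (inner ℝ aA aB : ℝ)) ^ 2 - 1 := by
    rw [heA, heB, trace_aux, hnA, hnB, inner_eq, hca, hsa, hcb, hsb]
    linear_combination
      (4 * (aA 0 * aB 0 + aA 1 * aB 1 + aA 2 * aB 2) ^ 2
          * (Real.sin (β / 2) ^ 2 + Real.cos (β / 2) ^ 2 - 1)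
        - 4 * (aA 0 * aB 0 + aA 1 * aB 1 + aA 2 * aB 2) ^ 2 * Real.sin (β / 2) ^ 2) * p1
      + (-4 * (aA 0 * aB 0 + aA 1 * aB 1 + aA 2 * aB 2) ^ 2 * Real.sin (α / 2) ^ 2) * p2
  refine ⟨part1, ?_⟩
  set d : ℝ := (inner ℝ aA aB : ℝ) with hd_def
  set c : ℝ := Real.cos (α / 2) * Real.cos (β / 2) - Real.sin (α / 2) * Real.sin (β / 2) * d
    with hc_def
  have hd : |d| ≤ 1 := by
    have h := abs_real_inner_le_norm aA aB
    rw [hA, hB] at h; simpa using h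
  have hd1 : -1 ≤ d := by have := abs_le.mp hd; exact this.1
  have hd2 : d ≤ 1 := by have := abs_le.mp hd; exact this.2
  have hd3 : d ^ 2 ≤ 1 := by nlinarith
  have hc2 : c ^ 2 ≤ 1 := by
    rw [hc_def]
    nlinarith [mul_nonneg (by linarith : (0:ℝ) ≤ 1 + d)
        (sq_nonneg (Real.cos (α / 2) * Real.sin (β / 2) + Real.sin (α / 2) * Real.cos (β / 2))),
      mul_nonneg (by linarith : (0:ℝ) ≤ 1 - d)
        (sq_nonneg (Real.cos (α / 2) * Real.sin (β / 2) - Real.sin (α / 2) * Real.cos (β / 2))),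
      mul_nonneg (by linarith : (0:ℝ) ≤ 1 - d ^ 2)
        (sq_nonneg (Real.sin (α / 2) * Real.sin (β / 2))),
      sq_nonneg (Real.cos (α / 2) * Real.sin (β / 2) - Real.sin (α / 2) * Real.cos (β / 2)),
      sq_nonneg (Real.cos (α / 2) * Real.sin (β / 2) + Real.sin (α / 2) * Real.cos (β / 2)),
      sq_nonneg (Real.sin (α / 2) * Real.sin (β / 2)),
      sq_nonneg (Real.cos (α / 2) * Real.cos (β / 2) - Real.sin (α / 2) * Real.sin (β / 2)),
      sq_nonneg (Real.cos (α / 2) * Real.cos (β / 2) + Real.sin (α / 2) * Real.sin (β / 2)), p1, p2]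
  have habs : |c| ≤ 1 := abs_le.mpr ⟨by nlinarith, by nlinarith⟩
  have harc : Real.cos (Real.arccos |c|) = |c| :=
    Real.cos_arccos (by linarith [abs_nonneg c]) habs
  have hkey : (Matrix.trace (NormedSpace.exp (skew (β • aB)) * NormedSpace.exp (skew (α • aA))) - 1) / 2
      = Real.cos (2 * Real.arccos |c|) := by
    rw [part1, Real.cos_two_mul, harc, sq_abs]; ring
  rw [hkey]
  exact Real.arccos_cos (by linarith [Real.arccos_nonneg |c|])
    (by
      have h1 : Real.arccos |c| ≤ Real.pi / 2 := (Real.arccos_le_pi_div_two).mpr (abs_nonneg c)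
      linarith)
end

section
/- For all a', b' ∈ [0, 1] and all d ∈ [0, 1]: (arccos(d·a' + (1 − d)·b'))² ≤ d·(arccos a')² + (1 − d)·(arccos b')². That is, the function x ↦ (arccos x)² is midpoint-to-general convex on [0, 1]. -/
open Real Set

private lemma key_ineq {x : ℝ} (hx : x ∈ Ioo (0:ℝ) 1) :
    x * Real.arccos x < Real.sqrt (1 - x ^ 2) := by
  have h1 : Real.arccos x < π / 2 := Real.arccos_lt_pi_div_two.2 hx.1
  have h0 : 0 < Real.arccos x := Real.arccos_pos.2 hx.2
  have hcos : Real.cos (Real.arccos x) = x := Real.cos_arccos (by linarith [hx.1]) hx.2.le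
  have hsin : Real.sin (Real.arccos x) = Real.sqrt (1 - x ^ 2) := Real.sin_arccos x
  have htan := Real.lt_tan h0 h1
  rw [Real.tan_eq_sin_div_cos, hcos, hsin] at htan
  have hxpos : (0:ℝ) < x := hx.1
  have hxne : x ≠ 0 := ne_of_gt hxpos
  calc x * Real.arccos x < x * (Real.sqrt (1 - x ^ 2) / x) :=
        mul_lt_mul_of_pos_left htan hxpos
    _ = Real.sqrt (1 - x ^ 2) := by field_simp

private lemma arccos_sq_convexOn :
    ConvexOn ℝ (Icc (0:ℝ) 1) (fun x => Real.arccos x ^ 2) := by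
  set f : ℝ → ℝ := fun x => Real.arccos x ^ 2 with hf
  set g : ℝ → ℝ := fun x => -(2 * Real.arccos x / Real.sqrt (1 - x ^ 2)) with hg
  have hint : interior (Icc (0:ℝ) 1) = Ioo (0:ℝ) 1 := interior_Icc
  have hs : ∀ x ∈ Ioo (0:ℝ) 1, 0 < Real.sqrt (1 - x ^ 2) := by
    intro x hx
    apply Real.sqrt_pos.2
    nlinarith [hx.1, hx.2]
  have hderivf : ∀ x ∈ Ioo (0:ℝ) 1, HasDerivAt f (g x) x := by
    intro x hx
    have h1 : x ≠ -1 := by intro h; rw [h] at hx; linarith [hx.1]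
    have h2 : x ≠ 1 := ne_of_lt hx.2
    have hA := (Real.hasDerivAt_arccos h1 h2).pow 2
    refine hA.congr_deriv ?_
    have hspos := hs x hx
    have hsne : Real.sqrt (1 - x ^ 2) ≠ 0 := ne_of_gt hspos
    simp only [hg]
    field_simp
    try ring
  have hderivf_eq : ∀ x ∈ Ioo (0:ℝ) 1, deriv f x = g x := fun x hx => (hderivf x hx).deriv
  have hderivg : ∀ x ∈ Ioo (0:ℝ) 1,
      HasDerivAt g (2 * (Real.sqrt (1 - x ^ 2) - x * Real.arccos x) / Real.sqrt (1 - x ^ 2) ^ 3) x := by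
    intro x hx
    have h1 : x ≠ -1 := by intro h; rw [h] at hx; linarith [hx.1]
    have h2 : x ≠ 1 := ne_of_lt hx.2
    have hspos := hs x hx
    have hsne : Real.sqrt (1 - x ^ 2) ≠ 0 := ne_of_gt hspos
    have hne : 1 - x ^ 2 ≠ 0 := by nlinarith [hx.1, hx.2]
    have hinner : HasDerivAt (fun y : ℝ => 1 - y ^ 2) (-(2 * x)) x := by
      have := (hasDerivAt_pow 2 x).const_sub 1
      simpa using this
    have hS : HasDerivAt (fun y : ℝ => Real.sqrt (1 - y ^ 2)) (-(x / Real.sqrt (1 - x ^ 2))) x := by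
      have := (Real.hasDerivAt_sqrt hne).comp x hinner
      refine this.congr_deriv ?_
      field_simp
    have hN : HasDerivAt (fun y : ℝ => 2 * Real.arccos y) (2 * -(1 / Real.sqrt (1 - x ^ 2))) x :=
      (Real.hasDerivAt_arccos h1 h2).const_mul 2
    have hdiv := (hN.div hS hsne).neg
    refine hdiv.congr_deriv ?_
    field_simp
    ring
  have hgmono : MonotoneOn g (Ioo (0:ℝ) 1) := by
    have : StrictMonoOn g (Ioo (0:ℝ) 1) := by
      apply strictMonoOn_of_deriv_pos (convex_Ioo 0 1)
      · intro x hx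
        exact (hderivg x hx).continuousAt.continuousWithinAt
      · intro x hx
        rw [interior_Ioo] at hx
        rw [(hderivg x hx).deriv]
        have hspos := hs x hx
        have hkey := key_ineq hx
        apply div_pos (by nlinarith) (by positivity)
    exact this.monotoneOn
  apply MonotoneOn.convexOn_of_deriv (convex_Icc 0 1)
  · exact (Real.continuous_arccos.pow 2).continuousOn
  · rw [hint]
    intro x hx
    exact (hderivf x hx).differentiableAt.differentiableWithinAt
  · rw [hint]
    intro x hx y hy hxy
    rw [hderivf_eq x hx, hderivf_eq y hy]
    exact hgmono hx hy hxy

theorem arccos_sq_convex_combination (a b d : ℝ)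
    (ha : a ∈ Set.Icc (0 : ℝ) 1) (hb : b ∈ Set.Icc (0 : ℝ) 1) (hd : d ∈ Set.Icc (0 : ℝ) 1) :
    (Real.arccos (d * a + (1 - d) * b)) ^ 2
      ≤ d * (Real.arccos a) ^ 2 + (1 - d) * (Real.arccos b) ^ 2 := by
  have h := arccos_sq_convexOn.2 ha hb hd.1 (show (0:ℝ) ≤ 1 - d by linarith [hd.2]) (show d + (1 - d) = 1 by ring)
  simpa using h
end
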